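/- For fibrewise pointed maps f, g : X → Y over a normal base domain X, D_B(f, g) ≤ cat_B^*(f) + cat_B^*(g). -/

import Mathlib

open scoped unitInterval

variable {B X Y Z X' Y' : Type*} [TopologicalSpace B] [TopologicalSpace X]
  [TopologicalSpace Y] [TopologicalSpace Z] [TopologicalSpace X'] [TopologicalSpace Y']

/-- `f` and `g` are fibrewise homotopic over `B` on the subset `U ⊆ X`:
there is a homotopy `H` from `f|U` to `g|U` each of whose stages is fibrewise. -/
def FibHomotopicOn (pX : X → B) (pY : Y → B) (f g : X → Y) (U : Set X) : Prop :=
  ∃ H : C(U × unitInterval, Y),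
    (∀ u : U, H (u, 0) = f u) ∧ (∀ u : U, H (u, 1) = g u) ∧
    (∀ (u : U) (t : unitInterval), pY (H (u, t)) = pX u)

/-- The parametrized (fibrewise) homotopic distance `D_B(f,g)`: the least `n`
such that `X` has an open cover by `n+1` sets on each of which `f` and `g` are
fibrewise homotopic (`∞` if there is no such cover). -/
noncomputable def fibDist (pX : X → B) (pY : Y → B) (f g : X → Y) : ℕ∞ :=
  sInf ((fun n : ℕ => (n : ℕ∞)) ''
    {n : ℕ | ∃ U : Fin (n + 1) → Set X,
      (∀ i, IsOpen (U i)) ∧ (⋃ i, U i) = Set.univ ∧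
      ∀ i, FibHomotopicOn pX pY f g (U i)})

section Auxiliary

set_option linter.unusedSectionVars false
set_option maxHeartbeats 1000000

lemma FibHomotopicOn.mono {pX : X → B} {pY : Y → B} {f g : X → Y} {U V : Set X}
    (h : FibHomotopicOn pX pY f g U) (hVU : V ⊆ U) : FibHomotopicOn pX pY f g V := by
  obtain ⟨H, h0, h1, hp⟩ := h
  refine ⟨⟨fun q => H (Set.inclusion hVU q.1, q.2), ?_⟩, ?_, ?_, ?_⟩
  · exact H.continuous.comp (((continuous_inclusion hVU).comp continuous_fst).prodMk
      continuous_snd)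
  · exact fun u => h0 _
  · exact fun u => h1 _
  · exact fun u t => hp _ t

lemma FibHomotopicOn.trans_symm {pX : X → B} {pY : Y → B} {f g h : X → Y} {U : Set X}
    (hf : Continuous f) (hg : Continuous g) (hh : Continuous h)
    (h1 : FibHomotopicOn pX pY f h U) (h2 : FibHomotopicOn pX pY g h U) :
    FibHomotopicOn pX pY f g U := by
  obtain ⟨H1, h10, h11, h1p⟩ := h1
  obtain ⟨H2, h20, h21, h2p⟩ := h2
  let Ff : C(U, Y) := ⟨fun u => f u, hf.comp continuous_subtype_val⟩
  let Fg : C(U, Y) := ⟨fun u => g u, hg.comp continuous_subtype_val⟩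
  let Fh : C(U, Y) := ⟨fun u => h u, hh.comp continuous_subtype_val⟩
  let HT1 : ContinuousMap.Homotopy Ff Fh :=
    { toFun := fun p => H1 (p.2, p.1)
      continuous_toFun := H1.continuous.comp (continuous_snd.prodMk continuous_fst)
      map_zero_left := fun u => h10 u
      map_one_left := fun u => h11 u }
  let HT2 : ContinuousMap.Homotopy Fg Fh :=
    { toFun := fun p => H2 (p.2, p.1)
      continuous_toFun := H2.continuous.comp (continuous_snd.prodMk continuous_fst)
      map_zero_left := fun u => h20 u
      map_one_left := fun u => h21 u }
  let HT := HT1.trans HT2.symm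
  refine ⟨⟨fun q => HT (q.2, q.1),
    HT.continuous.comp (continuous_snd.prodMk continuous_fst)⟩, ?_, ?_, ?_⟩
  · exact fun u => HT.apply_zero u
  · exact fun u => HT.apply_one u
  · intro u t
    show pY (HT (t, u)) = pX u
    rw [ContinuousMap.Homotopy.trans_apply]
    split_ifs with hle
    · exact h1p u _
    · show pY (HT2.symm (_, u)) = pX u
      rw [ContinuousMap.Homotopy.symm_apply]
      exact h2p u _

lemma FibHomotopicOn.glue {ι : Type*} {pX : X → B} {pY : Y → B} {f g : X → Y}
    (A : ι → Set X) (hopen : ∀ i, IsOpen (A i))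
    (hdisj : ∀ i j, i ≠ j → Disjoint (A i) (A j))
    (hfib : ∀ i, FibHomotopicOn pX pY f g (A i)) :
    FibHomotopicOn pX pY f g (⋃ i, A i) := by
  classical
  choose H h0 h1 hp using hfib
  let F : X × unitInterval → Y := fun p =>
    if h : ∃ i, p.1 ∈ A i then H h.choose (⟨p.1, h.choose_spec⟩, p.2) else f p.1
  have hFeq : ∀ (i : ι) (x : X) (hx : x ∈ A i) (t : unitInterval),
      F (x, t) = H i (⟨x, hx⟩, t) := by
    intro i x hx t
    have hex : ∃ j, x ∈ A j := ⟨i, hx⟩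
    have hij : hex.choose = i := by
      by_contra hne
      exact (hdisj _ _ hne).ne_of_mem hex.choose_spec hx rfl
    subst hij
    show (if h : ∃ i, x ∈ A i then H h.choose (⟨x, h.choose_spec⟩, t) else f x) = _
    rw [dif_pos hex]
  have hcont : Continuous (fun q : (⋃ i, A i) × unitInterval => F (q.1.1, q.2)) := by
    rw [continuous_iff_continuousAt]
    rintro ⟨⟨x, hx⟩, t⟩
    obtain ⟨i, hxi⟩ := Set.mem_iUnion.mp hx
    have hco : ContinuousOn F (A i ×ˢ (Set.univ : Set unitInterval)) := by
      rw [continuousOn_iff_continuous_restrict]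
      have : (A i ×ˢ (Set.univ : Set unitInterval)).domRestrict F =
          (H i) ∘ (fun q : (A i ×ˢ (Set.univ : Set unitInterval) : Set (X × unitInterval)) =>
            ((⟨q.1.1, q.2.1⟩ : A i), q.1.2)) := by
        funext q
        exact hFeq i q.1.1 q.2.1 q.1.2
      rw [this]
      exact (H i).continuous.comp
        ((Continuous.subtype_mk (continuous_fst.comp continuous_subtype_val) _).prodMk
          (continuous_snd.comp continuous_subtype_val))
    have hmem : (A i ×ˢ (Set.univ : Set unitInterval)) ∈
        nhds (((⟨x, hx⟩ : (⋃ i, A i)) : X), t) :=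
      ((hopen i).prod isOpen_univ).mem_nhds (by exact ⟨hxi, trivial⟩)
    have hFat : ContinuousAt F (((⟨x, hx⟩ : (⋃ i, A i)) : X), t) := hco.continuousAt hmem
    have he : Continuous (fun q : (⋃ i, A i) × unitInterval => ((q.1 : X), q.2)) :=
      (continuous_subtype_val.comp continuous_fst).prodMk continuous_snd
    show ContinuousAt ((F ∘ fun q : (⋃ i, A i) × unitInterval => ((q.1 : X), q.2))) _
    exact ContinuousAt.comp (x := (⟨⟨x, hx⟩, t⟩ : (⋃ i, A i) × unitInterval)) hFat
      he.continuousAt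
  refine ⟨⟨fun q => F (q.1.1, q.2), hcont⟩, ?_, ?_, ?_⟩
  · rintro ⟨x, hx⟩
    obtain ⟨i, hxi⟩ := Set.mem_iUnion.mp hx
    simp only [ContinuousMap.coe_mk]
    rw [hFeq i x hxi 0]
    exact h0 i _
  · rintro ⟨x, hx⟩
    obtain ⟨i, hxi⟩ := Set.mem_iUnion.mp hx
    simp only [ContinuousMap.coe_mk]
    rw [hFeq i x hxi 1]
    exact h1 i _
  · rintro ⟨x, hx⟩ t
    obtain ⟨i, hxi⟩ := Set.mem_iUnion.mp hx
    simp only [ContinuousMap.coe_mk]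
    rw [hFeq i x hxi t]
    exact hp i _ t

lemma exists_pou [NormalSpace X] (N : ℕ) (U : Fin N → Set X) (ho : ∀ i, IsOpen (U i))
    (hU : (⋃ i, U i) = Set.univ) :
    ∃ φ : Fin N → X → ℝ, (∀ i, Continuous (φ i)) ∧ (∀ i x, 0 ≤ φ i x) ∧
      (∀ x, ∑ i, φ i x = 1) ∧ (∀ i x, φ i x ≠ 0 → x ∈ U i) := by
  obtain ⟨fb, hfb⟩ := BumpCovering.exists_isSubordinate_of_locallyFinite isClosed_univ U ho
    (locallyFinite_of_finite U) (by rw [hU])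
  set ρ := fb.toPartitionOfUnity with hρ
  have hsub : ρ.IsSubordinate U := hfb.toPartitionOfUnity
  refine ⟨fun i x => ρ i x, fun i => (ρ i).continuous, fun i x => ρ.nonneg i x, ?_, ?_⟩
  · intro x
    have := ρ.sum_eq_one (Set.mem_univ x)
    rwa [finsum_eq_sum_of_fintype] at this
  · intro i x hx
    exact hsub i (subset_closure (by simpa using hx))

/-- the elementary "rectangle" sets -/
def Wset {n m : ℕ} (φ : Fin (n+1) → X → ℝ) (ψ : Fin (m+1) → X → ℝ)
    (P : Finset (Fin (n+1))) (Q : Finset (Fin (m+1))) : Set X :=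
  {x | (∀ i ∈ P, 0 < φ i x) ∧ (∀ j ∈ Q, 0 < ψ j x) ∧
    ∀ i ∈ P, ∀ j ∈ Q, ∀ i' j', (i' ∉ P ∨ j' ∉ Q) → φ i' x * ψ j' x < φ i x * ψ j x}

lemma Wset_open {n m : ℕ} {φ : Fin (n+1) → X → ℝ} {ψ : Fin (m+1) → X → ℝ}
    (hφ : ∀ i, Continuous (φ i)) (hψ : ∀ j, Continuous (ψ j))
    (P : Finset (Fin (n+1))) (Q : Finset (Fin (m+1))) : IsOpen (Wset φ ψ P Q) := by
  classical
  have : Wset φ ψ P Q =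
      (⋂ i ∈ P, {x | 0 < φ i x}) ∩ ((⋂ j ∈ Q, {x | 0 < ψ j x}) ∩
        (⋂ i ∈ P, ⋂ j ∈ Q, ⋂ i', ⋂ j',
          {x | (i' ∉ P ∨ j' ∉ Q) → φ i' x * ψ j' x < φ i x * ψ j x})) := by
    ext x
    simp only [Wset, Set.mem_setOf_eq, Set.mem_inter_iff, Set.mem_iInter]
    try tauto
  rw [this]
  refine IsOpen.inter ?_ (IsOpen.inter ?_ ?_)
  · exact isOpen_biInter_finset fun i _ => isOpen_lt continuous_const (hφ i)
  · exact isOpen_biInter_finset fun j _ => isOpen_lt continuous_const (hψ j)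
  · refine isOpen_biInter_finset fun i _ => isOpen_biInter_finset fun j _ =>
      isOpen_iInter_of_finite fun i' => isOpen_iInter_of_finite fun j' => ?_
    by_cases hc : i' ∉ P ∨ j' ∉ Q
    · have : {x : X | (i' ∉ P ∨ j' ∉ Q) → φ i' x * ψ j' x < φ i x * ψ j x} =
          {x | φ i' x * ψ j' x < φ i x * ψ j x} := by
        ext x; simp [hc]
      rw [this]
      exact isOpen_lt ((hφ i').mul (hψ j')) ((hφ i).mul (hψ j))
    · have : {x : X | (i' ∉ P ∨ j' ∉ Q) → φ i' x * ψ j' x < φ i x * ψ j x} = Set.univ := by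
        ext x; simp [hc]
      rw [this]; exact isOpen_univ

/-- nesting: two rectangle sets intersect only if nested -/
lemma Wset_nested {n m : ℕ} {φ : Fin (n+1) → X → ℝ} {ψ : Fin (m+1) → X → ℝ}
    {P P' : Finset (Fin (n+1))} {Q Q' : Finset (Fin (m+1))} {x : X}
    (hx : x ∈ Wset φ ψ P Q) (hx' : x ∈ Wset φ ψ P' Q')
    (hP : P.Nonempty) (hQ : Q.Nonempty) (hP' : P'.Nonempty) (hQ' : Q'.Nonempty) :
    (P ⊆ P' ∧ Q ⊆ Q') ∨ (P' ⊆ P ∧ Q' ⊆ Q) := by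
  obtain ⟨_, _, h3⟩ := hx
  obtain ⟨_, _, h3'⟩ := hx'
  by_contra hcon
  push_neg at hcon
  have key : (∃ i ∈ P, ∃ j ∈ Q, i ∉ P' ∨ j ∉ Q') ∧ (∃ i ∈ P', ∃ j ∈ Q', i ∉ P ∨ j ∉ Q) := by
    constructor
    · by_contra hk
      push_neg at hk
      obtain ⟨j₀, hj₀⟩ := hQ
      obtain ⟨i₀, hi₀⟩ := hP
      have hPP' : P ⊆ P' := fun i hi => ((hk i hi j₀ hj₀).1)
      have hQQ' : Q ⊆ Q' := fun j hj => ((hk i₀ hi₀ j hj).2)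
      exact hcon.1 hPP' hQQ'
    · by_contra hk
      push_neg at hk
      obtain ⟨j₀, hj₀⟩ := hQ'
      obtain ⟨i₀, hi₀⟩ := hP'
      have hPP : P' ⊆ P := fun i hi => ((hk i hi j₀ hj₀).1)
      have hQQ : Q' ⊆ Q := fun j hj => ((hk i₀ hi₀ j hj).2)
      exact hcon.2 hPP hQQ
  obtain ⟨⟨i, hiP, j, hjQ, hout⟩, ⟨i', hiP', j', hjQ', hout'⟩⟩ := key
  have l1 := h3 i hiP j hjQ i' j' hout'
  have l2 := h3' i' hiP' j' hjQ' i j hout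
  linarith

lemma Wset_covers {n m : ℕ} {φ : Fin (n+1) → X → ℝ} {ψ : Fin (m+1) → X → ℝ}
    (hφ0 : ∀ i x, 0 ≤ φ i x) (hφ1 : ∀ x, ∑ i, φ i x = 1)
    (hψ0 : ∀ j x, 0 ≤ ψ j x) (hψ1 : ∀ x, ∑ j, ψ j x = 1) (x : X) :
    ∃ (P : Finset (Fin (n+1))) (Q : Finset (Fin (m+1))),
      P.Nonempty ∧ Q.Nonempty ∧ x ∈ Wset φ ψ P Q := by
  classical
  obtain ⟨i₀, -, hi₀⟩ := Finset.exists_max_image Finset.univ (fun i => φ i x)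
    ⟨0, Finset.mem_univ 0⟩
  obtain ⟨j₀, -, hj₀⟩ := Finset.exists_max_image Finset.univ (fun j => ψ j x)
    ⟨0, Finset.mem_univ 0⟩
  have hφpos : 0 < φ i₀ x := by
    by_contra hle
    push_neg at hle
    have : ∑ i, φ i x ≤ 0 := Finset.sum_nonpos fun i _ => le_trans (hi₀ i (Finset.mem_univ i)) hle
    rw [hφ1 x] at this; linarith
  have hψpos : 0 < ψ j₀ x := by
    by_contra hle
    push_neg at hle
    have : ∑ j, ψ j x ≤ 0 := Finset.sum_nonpos fun j _ => le_trans (hj₀ j (Finset.mem_univ j)) hle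
    rw [hψ1 x] at this; linarith
  refine ⟨Finset.univ.filter (fun i => φ i x = φ i₀ x),
    Finset.univ.filter (fun j => ψ j x = ψ j₀ x),
    ⟨i₀, by simp⟩, ⟨j₀, by simp⟩, ?_, ?_, ?_⟩
  · intro i hi
    rw [Finset.mem_filter] at hi
    rw [hi.2]; exact hφpos
  · intro j hj
    rw [Finset.mem_filter] at hj
    rw [hj.2]; exact hψpos
  · intro i hi j hj i' j' hout
    rw [Finset.mem_filter] at hi hj
    rw [hi.2, hj.2]
    have hφ' : φ i' x ≤ φ i₀ x := hi₀ i' (Finset.mem_univ i')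
    have hψ' : ψ j' x ≤ ψ j₀ x := hj₀ j' (Finset.mem_univ j')
    rcases hout with hi' | hj'
    · have : φ i' x < φ i₀ x := lt_of_le_of_ne hφ' (by simpa using hi')
      nlinarith [hφ0 i' x, hψ0 j' x]
    · have : ψ j' x < ψ j₀ x := lt_of_le_of_ne hψ' (by simpa using hj')
      nlinarith [hφ0 i' x, hψ0 j' x]

/-- The key combination lemma. -/
lemma combine_covers [NormalSpace X] {pX : X → B} {pY : Y → B} {f g h : X → Y}
    (hf : Continuous f) (hg : Continuous g) (hh : Continuous h) {n m : ℕ}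
    {U : Fin (n+1) → Set X} {V : Fin (m+1) → Set X}
    (hUo : ∀ i, IsOpen (U i)) (hUc : (⋃ i, U i) = Set.univ)
    (hUf : ∀ i, FibHomotopicOn pX pY f h (U i))
    (hVo : ∀ j, IsOpen (V j)) (hVc : (⋃ j, V j) = Set.univ)
    (hVf : ∀ j, FibHomotopicOn pX pY g h (V j)) :
    ∃ W : Fin (n+m+1) → Set X, (∀ k, IsOpen (W k)) ∧ (⋃ k, W k) = Set.univ ∧
      ∀ k, FibHomotopicOn pX pY f g (W k) := by
  classical
  obtain ⟨φ, hφc, hφ0, hφ1, hφsupp⟩ := exists_pou (n+1) U hUo hUc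
  obtain ⟨ψ, hψc, hψ0, hψ1, hψsupp⟩ := exists_pou (m+1) V hVo hVc
  let ι : Fin (n+m+1) → Type _ := fun k =>
    {PQ : Finset (Fin (n+1)) × Finset (Fin (m+1)) //
      PQ.1.Nonempty ∧ PQ.2.Nonempty ∧ PQ.1.card + PQ.2.card = (k : ℕ) + 2}
  let A : ∀ k, ι k → Set X := fun _ pq => Wset φ ψ pq.1.1 pq.1.2
  refine ⟨fun k => ⋃ pq : ι k, A k pq, ?_, ?_, ?_⟩
  · intro k
    exact isOpen_iUnion fun pq => Wset_open hφc hψc _ _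
  · rw [Set.eq_univ_iff_forall]
    intro x
    obtain ⟨P, Q, hPne, hQne, hxW⟩ := Wset_covers hφ0 hφ1 hψ0 hψ1 x
    have hPc : P.card ≤ n + 1 := by simpa using Finset.card_le_univ P
    have hQc : Q.card ≤ m + 1 := by simpa using Finset.card_le_univ Q
    have hP1 : 1 ≤ P.card := hPne.card_pos
    have hQ1 : 1 ≤ Q.card := hQne.card_pos
    refine Set.mem_iUnion.mpr ⟨⟨P.card + Q.card - 2, by omega⟩, ?_⟩
    exact Set.mem_iUnion.mpr ⟨⟨(P, Q), hPne, hQne, by simp; omega⟩, hxW⟩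
  · intro k
    refine FibHomotopicOn.glue (A k) (fun pq => Wset_open hφc hψc _ _) ?_ ?_
    · rintro ⟨⟨P, Q⟩, hPne, hQne, hcard⟩ ⟨⟨P', Q'⟩, hPne', hQne', hcard'⟩ hne
      have hcP : P.card + Q.card = (k : ℕ) + 2 := hcard
      have hcP' : P'.card + Q'.card = (k : ℕ) + 2 := hcard'
      rw [Set.disjoint_left]
      intro x hx hx'
      apply hne
      have hx2 : x ∈ Wset φ ψ P Q := hx
      have hx2' : x ∈ Wset φ ψ P' Q' := hx'
      have hnest := Wset_nested hx2 hx2' hPne hQne hPne' hQne'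
      have heq : P = P' ∧ Q = Q' := by
        rcases hnest with ⟨hPP, hQQ⟩ | ⟨hPP, hQQ⟩
        · have h1 := Finset.card_le_card hPP
          have h2 := Finset.card_le_card hQQ
          exact ⟨Finset.eq_of_subset_of_card_le hPP (by omega),
            Finset.eq_of_subset_of_card_le hQQ (by omega)⟩
        · have h1 := Finset.card_le_card hPP
          have h2 := Finset.card_le_card hQQ
          exact ⟨(Finset.eq_of_subset_of_card_le hPP (by omega)).symm,
            (Finset.eq_of_subset_of_card_le hQQ (by omega)).symm⟩
      simp [heq.1, heq.2]
    · rintro ⟨⟨P, Q⟩, hPne, hQne, hcard⟩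
      obtain ⟨i, hiP⟩ := hPne
      obtain ⟨j, hjQ⟩ := hQne
      have hsubU : Wset φ ψ P Q ⊆ U i := by
        intro x hx
        exact hφsupp i x (ne_of_gt (hx.1 i hiP))
      have hsubV : Wset φ ψ P Q ⊆ V j := by
        intro x hx
        exact hψsupp j x (ne_of_gt (hx.2.1 j hjQ))
      exact FibHomotopicOn.trans_symm hf hg hh ((hUf i).mono hsubU) ((hVf j).mono hsubV)

end Auxiliary

theorem fibDist_le_add_cats [NormalSpace X] (pX : X → B) (pY : Y → B)
    (sX : B → X) (sY : B → Y) (f g : X → Y)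
    (hpX : Continuous pX) (hpY : Continuous pY) (hsX : Continuous sX) (hsY : Continuous sY)
    (hsecX : ∀ b, pX (sX b) = b) (hsecY : ∀ b, pY (sY b) = b)
    (hf : Continuous f) (hg : Continuous g)
    (hfp : ∀ x, pY (f x) = pX x) (hgp : ∀ x, pY (g x) = pX x)
    (hfs : ∀ b, f (sX b) = sY b) (hgs : ∀ b, g (sX b) = sY b) :
    fibDist pX pY f g ≤
      fibDist pX pY f (fun x => sY (pX x)) + fibDist pX pY g (fun x => sY (pX x)) := by
  classical
  set h : X → Y := fun x => sY (pX x) with hh_def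
  have hh : Continuous h := hsY.comp hpX
  set S1 := {n : ℕ | ∃ U : Fin (n + 1) → Set X,
      (∀ i, IsOpen (U i)) ∧ (⋃ i, U i) = Set.univ ∧
      ∀ i, FibHomotopicOn pX pY f h (U i)} with hS1
  set S2 := {n : ℕ | ∃ U : Fin (n + 1) → Set X,
      (∀ i, IsOpen (U i)) ∧ (⋃ i, U i) = Set.univ ∧
      ∀ i, FibHomotopicOn pX pY g h (U i)} with hS2
  by_cases h1 : ∃ n, n ∈ S1
  · by_cases h2 : ∃ n, n ∈ S2
    · set n₀ := Nat.find h1 with hn₀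
      set m₀ := Nat.find h2 with hm₀
      obtain ⟨U, hUo, hUc, hUf⟩ := Nat.find_spec h1
      obtain ⟨V, hVo, hVc, hVf⟩ := Nat.find_spec h2
      obtain ⟨W, hWo, hWc, hWf⟩ := combine_covers hf hg hh hUo hUc hUf hVo hVc hVf
      have step1 : fibDist pX pY f g ≤ ((n₀ + m₀ : ℕ) : ℕ∞) := by
        apply sInf_le
        exact ⟨n₀ + m₀, ⟨W, hWo, hWc, hWf⟩, rfl⟩
      refine step1.trans ?_
      have l1 : ((n₀ : ℕ) : ℕ∞) ≤ fibDist pX pY f h := by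
        apply le_sInf
        rintro b ⟨n, hn, rfl⟩
        exact Nat.cast_le.mpr (Nat.find_min' h1 hn)
      have l2 : ((m₀ : ℕ) : ℕ∞) ≤ fibDist pX pY g h := by
        apply le_sInf
        rintro b ⟨n, hn, rfl⟩
        exact Nat.cast_le.mpr (Nat.find_min' h2 hn)
      calc ((n₀ + m₀ : ℕ) : ℕ∞) = ((n₀ : ℕ) : ℕ∞) + ((m₀ : ℕ) : ℕ∞) := by push_cast; rfl
        _ ≤ fibDist pX pY f h + fibDist pX pY g h := add_le_add l1 l2
    · have : fibDist pX pY g h = ⊤ := by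
        rw [fibDist]
        refine (congrArg sInf ?_).trans sInf_empty
        rw [Set.image_eq_empty]
        rw [Set.eq_empty_iff_forall_notMem]
        exact fun n hn => h2 ⟨n, hn⟩
      rw [this, add_top]
      exact le_top
  · have : fibDist pX pY f h = ⊤ := by
      rw [fibDist]
      refine (congrArg sInf ?_).trans sInf_empty
      rw [Set.image_eq_empty]
      rw [Set.eq_empty_iff_forall_notMem]
      exact fun n hn => h1 ⟨n, hn⟩
    rw [this, top_add]
    exact le_top
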